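/- Let (a_n) be a strictly increasing sequence of positive integers with limsup_{n→∞} a_{n+1}/a_n < ∞ and ∑_n 1/a_n < ∞. Then there exists a bounded sequence of positive integers (b_n) such that ∑_{n=1}^∞ 1/(a_n + b_n) is rational. -/
import Mathlib

set_option maxHeartbeats 1000000

open Filter

/-- Tail sum `∑_{k≥n} 1/(a k + c)`. -/
noncomputable def tailT (a : ℕ → ℕ) (c n : ℕ) : ℝ := ∑' k, (1:ℝ)/(a (n+k) + c)

open Classical in
/-- Greedy choice of `b` at stage `n`, given remaining target `t`. -/
noncomputable def pickb (a : ℕ → ℕ) (B n : ℕ) (t : ℝ) : ℕ :=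
  if h : ∃ b, 1 ≤ b ∧ b ≤ B ∧ tailT a B (n+1) ≤ t - 1/(a n + b) then Nat.find h else B

/-- Remaining-target sequence for the greedy algorithm. -/
noncomputable def tseq (a : ℕ → ℕ) (B N : ℕ) (t0 : ℝ) : ℕ → ℝ
  | 0 => t0
  | m+1 => tseq a B N t0 m - 1/(a (N+m) + pickb a B (N+m) (tseq a B N t0 m))

theorem stmt_9 (a : ℕ → ℕ) (hmono : StrictMono a) (hpos : ∀ n, 0 < a n)
    (hsum : Summable fun n => (1 : ℝ) / (a n))
    (hratio : ∃ C : ℝ, ∀ᶠ n in atTop, (a (n + 1) : ℝ) / (a n : ℝ) ≤ C) :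
    ∃ b : ℕ → ℕ, (∀ n, 0 < b n) ∧ (∃ C : ℕ, ∀ n, b n ≤ C) ∧
      ∃ q : ℚ, (∑' n : ℕ, (1 : ℝ) / (a n + b n)) = q := by
  classical
  have har : ∀ n, (0:ℝ) < a n := fun n => by exact_mod_cast hpos n
  have ha1 : ∀ n, (1:ℝ) ≤ a n := fun n => by exact_mod_cast hpos n
  have han : ∀ n : ℕ, (n:ℝ) ≤ a n := fun n => by exact_mod_cast hmono.le_apply
  have hden : ∀ (n c : ℕ), (0:ℝ) < a n + c := fun n c => by have := har n; positivity
  obtain ⟨C₀, hC₀⟩ := hratio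
  set C : ℝ := max C₀ 1 with hCdef
  have hC1 : (1:ℝ) ≤ C := le_max_right _ _
  have hC0 : (0:ℝ) < C := lt_of_lt_of_le one_pos hC1
  obtain ⟨N₁, hN₁⟩ := eventually_atTop.1 hC₀
  have hCev : ∀ n, N₁ ≤ n → (a (n+1):ℝ) ≤ C * a n := by
    intro n hn
    have h := hN₁ n hn
    have := (div_le_iff₀ (har n)).1 (le_trans h (le_max_left C₀ 1))
    linarith [this]
  obtain ⟨B, hB2, hBr⟩ : ∃ B : ℕ, 2 ≤ B ∧ 4*C^2 + 1 ≤ (B:ℝ) - 1 := by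
    refine ⟨⌈4*C^2⌉₊ + 2, Nat.le_add_left 2 _, ?_⟩
    have h1 : 4*C^2 ≤ (⌈4*C^2⌉₊ : ℝ) := Nat.le_ceil _
    push_cast
    linarith
  have hB1r : (1:ℝ) ≤ B := by exact_mod_cast le_trans one_le_two hB2
  obtain ⟨N, hNB, hNC⟩ : ∃ N : ℕ, (∀ n, N ≤ n → (B:ℝ) ≤ a n) ∧
      (∀ n, N ≤ n → (a (n+1):ℝ) ≤ C * a n) := by
    refine ⟨max N₁ B, fun n hn => ?_, fun n hn => hCev n (le_trans (le_max_left _ _) hn)⟩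
    refine le_trans ?_ (han n)
    exact_mod_cast le_trans (le_max_right N₁ B) hn
  -- summability of the shifted/perturbed series
  have hsc : ∀ g : ℕ → ℕ, Summable (fun n => (1:ℝ)/(a n + g n)) := by
    intro g
    refine Summable.of_nonneg_of_le (fun n => by positivity) (fun n => ?_) hsum
    apply one_div_le_one_div_of_le (har n)
    simp
  have hstc : ∀ (c n : ℕ), Summable (fun k => (1:ℝ)/(a (n+k) + c)) := by
    intro c n
    exact (hsc fun _ => c).comp_injective (add_right_injective n)
  -- basic facts about tail sums
  have hLrec : ∀ (c n : ℕ), tailT a c n = 1/(a n + c) + tailT a c (n+1) := by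
    intro c n
    have h2 : tailT a c (n+1) = ∑' k, (1:ℝ)/(a (n+(k+1)) + c) :=
      tsum_congr fun k => by rw [show (n+1)+k = n+(k+1) from by ring]
    rw [tailT, Summable.tsum_eq_zero_add (hstc c n), Nat.add_zero, h2]
  have hLnn : ∀ (c n : ℕ), 0 ≤ tailT a c n :=
    fun c n => tsum_nonneg fun k => by positivity
  have hLmono : ∀ (c c' n : ℕ), c ≤ c' → tailT a c' n ≤ tailT a c n := by
    intro c c' n hcc
    refine Summable.tsum_le_tsum (fun k => ?_) (hstc c' n) (hstc c n)
    apply one_div_le_one_div_of_le (hden _ _)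
    have : (c:ℝ) ≤ c' := by exact_mod_cast hcc
    linarith
  have hLtend : ∀ c : ℕ, Tendsto (fun n => tailT a c n) atTop (nhds 0) := by
    intro c
    have : (fun n => tailT a c n) = fun i => ∑' k, (1:ℝ)/(a (k+i) + c) :=
      funext fun n => tsum_congr fun k => by rw [Nat.add_comm n k]
    rw [this]
    exact tendsto_sum_nat_add (fun n => (1:ℝ)/(a n + c))
  -- the gap estimate
  have hgap : ∀ n, N ≤ n → 1/((a n:ℝ)+1)^2 ≤ tailT a 1 (n+1) - tailT a B (n+1) := by
    intro n hn
    have h1 : 1/((a (n+1):ℝ)+1) - 1/((a (n+1):ℝ)+B) ≤ tailT a 1 (n+1) - tailT a B (n+1) := by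
      have := hLrec 1 (n+1); have := hLrec B (n+1)
      have h2 := hLmono 1 B (n+2) (le_trans one_le_two hB2)
      have e1 : ((1:ℕ):ℝ) = (1:ℝ) := by norm_num
      rw [hLrec 1 (n+1), hLrec B (n+1)] at *
      push_cast
      linarith
    refine le_trans ?_ h1
    set x : ℝ := (a (n+1):ℝ) with hx
    set y : ℝ := (a n:ℝ) with hy
    have hy1 : (1:ℝ) ≤ y := ha1 n
    have hx1 : (1:ℝ) ≤ x := ha1 (n+1)
    have hxy : x ≤ C * y := hNC n hn
    have hBy : (B:ℝ) ≤ y := hNB n hn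
    have hxB : x + B ≤ 2*C*y := by nlinarith
    have hx1' : x + 1 ≤ 2*C*y := by nlinarith
    have key : (x+1)*(x+B) ≤ ((B:ℝ)-1)*(y+1)^2 := by nlinarith
    rw [div_sub_div _ _ (by positivity) (by positivity)]
    rw [div_le_div_iff₀ (by positivity) (by positivity)]
    nlinarith [key]
  -- choose the rational target
  have hLU : tailT a B N < tailT a 1 N := by
    refine Summable.tsum_lt_tsum_of_nonneg (i := 0) (fun k => by positivity) (fun k => ?_) ?_ (hstc 1 N)
    · apply one_div_le_one_div_of_le (hden _ _)
      have : (1:ℝ) ≤ B := hB1r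
      push_cast
      linarith
    · show (1:ℝ)/(a (N+0) + B) < 1/(a (N+0) + (1:ℕ))
      have := hden (N+0) 1
      apply one_div_lt_one_div_of_lt (by push_cast at this ⊢; linarith)
      have h2 : (2:ℝ) ≤ B := by exact_mod_cast hB2
      push_cast
      linarith
  set hs : ℝ := ∑ i ∈ Finset.range N, (1:ℝ)/(a i + B) with hhs
  obtain ⟨q, hq1, hq2⟩ := exists_rat_btwn (by linarith : hs + tailT a B N < hs + tailT a 1 N)
  set t0 : ℝ := (q:ℝ) - hs with ht0
  -- properties of pickb
  have hex : ∀ n t, tailT a B n ≤ t →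
      ∃ b, 1 ≤ b ∧ b ≤ B ∧ tailT a B (n+1) ≤ t - 1/(a n + b) := by
    intro n t ht
    refine ⟨B, le_trans one_le_two hB2, le_refl _, ?_⟩
    have := hLrec B n
    linarith
  have hpick : ∀ n t, tailT a B n ≤ t →
      1 ≤ pickb a B n t ∧ pickb a B n t ≤ B ∧
        tailT a B (n+1) ≤ t - 1/(a n + pickb a B n t) ∧
        (2 ≤ pickb a B n t → t - 1/(a n + (pickb a B n t - 1 : ℕ)) < tailT a B (n+1)) := by
    intro n t ht
    have h := hex n t ht
    rw [pickb, dif_pos h]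
    obtain ⟨h1, h2, h3⟩ := Nat.find_spec h
    refine ⟨h1, h2, h3, fun hb2 => ?_⟩
    have hmin := Nat.find_min h (m := Nat.find h - 1) (by omega)
    by_contra hcon
    push_neg at hcon
    exact hmin ⟨by omega, by omega, hcon⟩
  -- the invariant
  have hinv : ∀ m, tailT a B (N+m) ≤ tseq a B N t0 m ∧ tseq a B N t0 m ≤ tailT a 1 (N+m) := by
    intro m
    induction m with
    | zero => constructor <;> · show _ ; simp only [tseq, Nat.add_zero]; linarith
    | succ m ih =>
      obtain ⟨ihL, ihU⟩ := ih
      obtain ⟨hp1, hpB, hpL, hpmin⟩ := hpick (N+m) (tseq a B N t0 m) ihL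
      have hstep : tseq a B N t0 (m+1)
          = tseq a B N t0 m - 1/(a (N+m) + pickb a B (N+m) (tseq a B N t0 m)) := rfl
      set t : ℝ := tseq a B N t0 m with htdef
      set n : ℕ := N + m with hndef
      set b : ℕ := pickb a B n t with hbdef
      clear_value t b
      have hnN : N ≤ n := Nat.le_add_right _ _
      have hidx : N + (m+1) = n + 1 := by omega
      rw [hstep, hidx]
      constructor
      · exact hpL
      · rcases eq_or_lt_of_le hp1 with hb1 | hb2
        · -- b = 1
          have hbn : b = 1 := hb1.symm
          subst hbn
          have hU := hLrec 1 n
          push_cast at hU ⊢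
          linarith
        · -- 2 ≤ b
          have hb2' : 2 ≤ b := hb2
          have hm := hpmin hb2'
          have hg := hgap n hnN
          have hbr : ((b - 1 : ℕ):ℝ) = (b:ℝ) - 1 := by
            have : 1 ≤ b := hp1
            push_cast [Nat.cast_sub this]
            ring
          have hstepb : 1/((a n:ℝ) + (b-1:ℕ)) - 1/((a n:ℝ) + b) ≤ 1/((a n:ℝ)+1)^2 := by
            rw [hbr]
            have hx : (0:ℝ) < a n := har n
            have hb2r : (2:ℝ) ≤ b := by exact_mod_cast hb2'
            rw [div_sub_div _ _ (by linarith) (by linarith)]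
            rw [div_le_div_iff₀ (by nlinarith) (by positivity)]
            have h1 : (1:ℝ) ≤ a n := ha1 n
            nlinarith [mul_pos hx (show (0:ℝ) < 2*(b:ℝ)-3 by linarith),
              mul_le_mul_of_nonneg_left hb2r (by linarith : (0:ℝ) ≤ (b:ℝ))]
          linarith
  -- partial sums of the greedy series
  set g : ℕ → ℝ := fun k => 1/(a (N+k) + pickb a B (N+k) (tseq a B N t0 k)) with hgdef
  have hpart : ∀ m, ∑ k ∈ Finset.range m, g k = t0 - tseq a B N t0 m := by
    intro m
    induction m with
    | zero => simp [tseq]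
    | succ m ih =>
      rw [Finset.sum_range_succ, ih]
      have : tseq a B N t0 (m+1) = tseq a B N t0 m - g m := rfl
      rw [this]; ring
  have htt : Tendsto (fun m => tseq a B N t0 m) atTop (nhds 0) := by
    have hshift : Tendsto (fun m : ℕ => N + m) atTop atTop :=
      tendsto_atTop_atTop.2 fun b => ⟨b, fun n hn => by omega⟩
    refine tendsto_of_tendsto_of_tendsto_of_le_of_le
      (((hLtend B).comp hshift)) (((hLtend 1)).comp hshift)
      (fun m => (hinv m).1) (fun m => (hinv m).2)
  -- the perturbation b
  set bb : ℕ → ℕ := fun n => if n < N then B else pickb a B n (tseq a B N t0 (n - N)) with hbbdef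
  have hbbpos : ∀ n, 0 < bb n := by
    intro n
    rw [hbbdef]
    by_cases h : n < N
    · simpa [h] using lt_of_lt_of_le two_pos hB2
    · simp only [h, if_false]
      have hn : n = N + (n - N) := by omega
      have := (hpick n (tseq a B N t0 (n-N)) (by rw (occs := .pos [1]) [hn]; exact (hinv (n-N)).1)).1
      omega
  have hbbB : ∀ n, bb n ≤ B := by
    intro n
    rw [hbbdef]
    by_cases h : n < N
    · simp [h]
    · simp only [h, if_false]
      have hn : n = N + (n - N) := by omega
      exact (hpick n (tseq a B N t0 (n-N)) (by rw (occs := .pos [1]) [hn]; exact (hinv (n-N)).1)).2.1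
  refine ⟨bb, hbbpos, ⟨B, hbbB⟩, q, ?_⟩
  -- compute the sum
  have hsummb : Summable (fun n => (1:ℝ)/(a n + bb n)) := hsc bb
  have hsplit := Summable.sum_add_tsum_nat_add N hsummb
  have hhead : ∑ i ∈ Finset.range N, (1:ℝ)/(a i + bb i) = hs := by
    apply Finset.sum_congr rfl
    intro i hi
    have : i < N := Finset.mem_range.1 hi
    simp [hbbdef, this]
  have htail : (∑' k, (1:ℝ)/(a (k+N) + bb (k+N))) = t0 := by
    have he : ∀ k, (1:ℝ)/(a (k+N) + bb (k+N)) = g k := by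
      intro k
      have h1 : ¬ (k + N < N) := by omega
      have h2 : k + N - N = k := by omega
      rw [hgdef, hbbdef]
      simp only [h1, if_false, h2]
      rw [show k + N = N + k from by omega]
    rw [tsum_congr he]
    -- ∑' g = t0 via partial sums
    have hgs : Summable g := by
      refine Summable.of_nonneg_of_le (fun k => by positivity) (fun k => ?_)
        ((hsum).comp_injective (add_right_injective N))
      show (1:ℝ)/(a (N+k) + _) ≤ 1/(a (N+k))
      apply one_div_le_one_div_of_le (har _)
      exact le_add_of_nonneg_right (by positivity)
    have h1 : Tendsto (fun m => ∑ k ∈ Finset.range m, g k) atTop (nhds (∑' k, g k)) :=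
      hgs.hasSum.tendsto_sum_nat
    have h2 : Tendsto (fun m => ∑ k ∈ Finset.range m, g k) atTop (nhds t0) := by
      have : (fun m => ∑ k ∈ Finset.range m, g k) = fun m => t0 - tseq a B N t0 m :=
        funext hpart
      rw [this]
      simpa using (tendsto_const_nhds (x := t0)).sub htt
    exact tendsto_nhds_unique h1 h2
  rw [← hsplit, hhead, htail]
  rw [ht0]; ring
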